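/- A sphere S^{n−1} ⊂ ℝⁿ (n ≥ 2) does not preserve Markov's local inequality: there is no constant c > 0 such that for all polynomials P of degree at most 1 and all x ∈ S^{n−1}, 0 < r ≤ 1, one has max over S^{n−1} ∩ closed B(x,r) of |∇P| ≤ (c/r) max over S^{n−1} ∩ closed B(x,r) of |P|. -/

import Mathlib

open Metric Set InnerProductSpace

/-- Evaluation of a multivariate polynomial as a function on `ℝⁿ`. -/
noncomputable def polyFun (n : ℕ) (P : MvPolynomial (Fin n) ℝ) :
    EuclideanSpace ℝ (Fin n) → ℝ :=
  fun x => MvPolynomial.eval (fun i => x i) P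

/-- The unit sphere `S^{n-1} ⊆ ℝⁿ` (`n ≥ 2`) does not preserve Markov's local inequality,
already for polynomials of degree at most `1`. -/
theorem stmt_9 (n : ℕ) (hn : 2 ≤ n) :
    ¬ ∃ c : ℝ, 0 < c ∧
      ∀ P : MvPolynomial (Fin n) ℝ, P.totalDegree ≤ 1 →
      ∀ x ∈ sphere (0 : EuclideanSpace ℝ (Fin n)) 1, ∀ r : ℝ, 0 < r → r ≤ 1 →
        sSup ((fun y => ‖gradient (polyFun n P) y‖) ''
            (sphere (0 : EuclideanSpace ℝ (Fin n)) 1 ∩ closedBall x r)) ≤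
          (c / r) * sSup ((fun y => |polyFun n P y|) ''
            (sphere (0 : EuclideanSpace ℝ (Fin n)) 1 ∩ closedBall x r)) := by
  rintro ⟨c, hc, H⟩
  have hn0 : 0 < n := by omega
  set i0 : Fin n := ⟨0, hn0⟩
  set P : MvPolynomial (Fin n) ℝ := MvPolynomial.X i0 - MvPolynomial.C 1 with hP
  -- degree ≤ 1
  have hdeg : P.totalDegree ≤ 1 := by
    rw [hP, sub_eq_add_neg]
    refine le_trans (MvPolynomial.totalDegree_add _ _) ?_
    simp [MvPolynomial.totalDegree_X, MvPolynomial.totalDegree_neg]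
  set x : EuclideanSpace ℝ (Fin n) := EuclideanSpace.single i0 1 with hx
  have hxs : x ∈ sphere (0 : EuclideanSpace ℝ (Fin n)) 1 := by
    simp [hx, EuclideanSpace.norm_single]
  set r : ℝ := min 1 c⁻¹ with hr
  have hr0 : 0 < r := lt_min one_pos (inv_pos.mpr hc)
  have hr1 : r ≤ 1 := min_le_left _ _
  have key := H P hdeg x hxs r hr0 hr1
  set S := sphere (0 : EuclideanSpace ℝ (Fin n)) 1 ∩ closedBall x r with hS
  have hxS : x ∈ S := ⟨hxs, mem_closedBall_self hr0.le⟩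
  have hSne : S.Nonempty := ⟨x, hxS⟩
  -- polyFun evaluation
  have hPF : ∀ y : EuclideanSpace ℝ (Fin n), polyFun n P y = y i0 - 1 := by
    intro y; simp [polyFun, hP]
  -- gradient
  have hgrad : ∀ y : EuclideanSpace ℝ (Fin n),
      gradient (polyFun n P) y = EuclideanSpace.single i0 1 := by
    intro y
    have : HasGradientAt (polyFun n P) (EuclideanSpace.single i0 1) y := by
      rw [hasGradientAt_iff_hasFDerivAt]
      have h : (toDual ℝ (EuclideanSpace ℝ (Fin n))) (EuclideanSpace.single i0 1)
          = EuclideanSpace.proj i0 := by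
        ext w
        simp [toDual_apply_apply, EuclideanSpace.inner_single_left]
      rw [h]
      have := ((EuclideanSpace.proj (𝕜 := ℝ) i0).hasFDerivAt (x := y)).sub_const (1:ℝ)
      refine this.congr_of_eventuallyEq ?_
      filter_upwards with z
      simp [hPF z]
    exact this.gradient
  -- LHS = 1
  have hLHS : sSup ((fun y => ‖gradient (polyFun n P) y‖) '' S) = 1 := by
    have : (fun y => ‖gradient (polyFun n P) y‖) '' S = {1} := by
      apply Subset.antisymm
      · rintro v ⟨y, -, rfl⟩
        simp [hgrad, EuclideanSpace.norm_single]
      · rintro v rfl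
        exact ⟨x, hxS, by simp [hgrad, EuclideanSpace.norm_single]⟩
    rw [this, csSup_singleton]
  -- bound on |P| on S
  have hbound : ∀ y ∈ S, |polyFun n P y| ≤ r ^ 2 / 2 := by
    rintro y ⟨hy1, hy2⟩
    have hny : ‖y‖ = 1 := by simpa using hy1
    have hd : ‖y - x‖ ≤ r := by
      rw [← dist_eq_norm]; exact hy2
    have hnx : ‖x‖ = 1 := by simp [hx, EuclideanSpace.norm_single]
    have hinner : (inner ℝ y x : ℝ) = y i0 := by
      simp [hx, EuclideanSpace.inner_single_right]
    have hsq : ‖y - x‖ ^ 2 = 2 * (1 - y i0) := by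
      rw [@norm_sub_sq_real, hny, hnx, hinner]; ring
    have h1 : 1 - y i0 = ‖y - x‖ ^ 2 / 2 := by linarith
    have h2 : ‖y - x‖ ^ 2 ≤ r ^ 2 := by
      exact pow_le_pow_left₀ (norm_nonneg _) hd 2
    have h3 : 0 ≤ 1 - y i0 := by
      rw [h1]; positivity
    rw [hPF, abs_sub_comm, abs_of_nonneg h3]
    linarith
  have hRHS : sSup ((fun y => |polyFun n P y|) '' S) ≤ r ^ 2 / 2 := by
    apply csSup_le (hSne.image _)
    rintro v ⟨y, hy, rfl⟩
    exact hbound y hy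
  -- conclude
  rw [hLHS] at key
  have hcr : 0 ≤ c / r := le_of_lt (div_pos hc hr0)
  have : (1 : ℝ) ≤ (c / r) * (r ^ 2 / 2) :=
    key.trans (mul_le_mul_of_nonneg_left hRHS hcr)
  have heq : (c / r) * (r ^ 2 / 2) = c * r / 2 := by
    field_simp
  rw [heq] at this
  have hcrle : c * r ≤ 1 := by
    calc c * r ≤ c * c⁻¹ := by
          exact mul_le_mul_of_nonneg_left (min_le_right _ _) hc.le
      _ = 1 := mul_inv_cancel₀ hc.ne'
  linarith
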